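/- The derivative series satisfies ∑_{n≥1} n * Catalan(n) * Catalan(n+1) / 16^{n-1} = 16 * (8*(10/(3π) - 1)), i.e., M'(1/16) = 128(10/(3π) - 1) where M(z) = ∑ Catalan(n)Catalan(n+1) z^n. -/

import Mathlib

open Real Filter Topology Real.Wallis

noncomputable def Wf (n : ℕ) : ℝ := 128 * (5 * n + 3) / (3 * (n + 1) * W n)

private lemma Waux_binom_fac (n : ℕ) :
    (Nat.centralBinom n : ℝ) * (Nat.factorial n : ℝ)^2 = (Nat.factorial (2 * n) : ℝ) := by
  have h := Nat.choose_mul_factorial_mul_factorial (Nat.le_mul_of_pos_left n two_pos)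
  have h2 : 2 * n - n = n := by omega
  rw [h2] at h
  rw [Nat.centralBinom_eq_two_mul_choose]
  push_cast [← h]
  ring

private lemma Waux_key (n : ℕ) :
    ((Nat.centralBinom n : ℝ))^2 * W n * (2 * (n : ℝ) + 1) = 16 ^ n := by
  have hW := W_eq_factorial_ratio n
  have hfac : (0:ℝ) < (Nat.factorial n : ℝ) := by positivity
  have h2 : (0:ℝ) < ((2 * n).factorial : ℝ) := by positivity
  have hb := Waux_binom_fac n
  have hs : ((Nat.centralBinom n : ℝ))^2 * (Nat.factorial n : ℝ)^4 =
      ((2*n).factorial : ℝ)^2 := by nlinarith [hb]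
  rw [hW, show ((16:ℝ)) ^ n = 2 ^ (4 * n) by rw [pow_mul]; norm_num]
  have hpos : ((2*n).factorial : ℝ)^2 * (2 * (n:ℝ) + 1) ≠ 0 := by positivity
  field_simp
  linear_combination hs

private lemma Waux_catalan (k : ℕ) :
    (catalan k : ℝ) = (Nat.centralBinom k : ℝ) / (k + 1) := by
  have h : ((k:ℝ) + 1) * (catalan k : ℝ) = (Nat.centralBinom k : ℝ) := by
    exact_mod_cast congrArg (Nat.cast : ℕ → ℝ) (succ_mul_catalan_eq_centralBinom k)
  have hk : ((k:ℝ) + 1) ≠ 0 := by positivity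
  field_simp [← h]
  linear_combination h

private lemma Waux_tele (n : ℕ) :
    (n : ℝ) * (catalan n * catalan (n + 1) : ℝ) / 16 ^ (n - 1) = Wf (n + 1) - Wf n := by
  cases n with
  | zero =>
      simp [Wf, W, Finset.prod_range_succ]
      norm_num
  | succ m =>
      have hW : 0 < W (m + 1) := W_pos _
      have key := Waux_key (m + 1)
      push_cast at key
      have hx : (0:ℝ) < (Nat.centralBinom (m + 1) : ℝ) := by
        exact_mod_cast Nat.centralBinom_pos (m + 1)
      have hy : (Nat.centralBinom (m + 1 + 1) : ℝ)
          = 2 * (2 * (m:ℝ) + 3) * (Nat.centralBinom (m + 1) : ℝ) / ((m:ℝ) + 2) := by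
        have h := congrArg (Nat.cast : ℕ → ℝ) (Nat.succ_mul_centralBinom_succ (m + 1))
        push_cast at h
        have hm : ((m:ℝ) + 2) ≠ 0 := by positivity
        field_simp
        linear_combination h
      have h16m : (16:ℝ) ^ m
          = (Nat.centralBinom (m + 1) : ℝ)^2 * W (m + 1) * (2 * (m:ℝ) + 3) / 16 := by
        linear_combination -key / 16
      have hWs := W_succ (m + 1)
      rw [Waux_catalan, Waux_catalan, Wf, Wf, hWs, Nat.add_sub_cancel, h16m, hy]
      push_cast
      have h1 : (2 * ((m:ℝ)+1) + 1) ≠ 0 := by positivity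
      have h2 : (2 * ((m:ℝ)+1) + 3) ≠ 0 := by positivity
      have hm2 : ((m:ℝ) + 2) ≠ 0 := by positivity
      field_simp
      ring

private lemma Wf_tendsto : Tendsto Wf atTop (𝓝 (1280 / (3 * π))) := by
  have hWlim := tendsto_W_nhds_pi_div_two
  have h1 : Tendsto (fun n : ℕ => ((5 * n + 3 : ℝ)) / (n + 1)) atTop (𝓝 5) := by
    have h0 : Tendsto (fun n : ℕ => 1 / ((n : ℝ) + 1)) atTop (𝓝 0) :=
      tendsto_one_div_add_atTop_nhds_zero_nat
    have := (tendsto_const_nhds (x := (5:ℝ)) (f := atTop)).sub (h0.const_mul 2)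
    simp only [mul_zero, sub_zero] at this
    refine this.congr fun n => ?_
    have hn : ((n:ℝ) + 1) ≠ 0 := by positivity
    field_simp
    ring
  have hpi : (π / 2 : ℝ) ≠ 0 := by positivity
  have h2 : Tendsto (fun n => (W n)⁻¹) atTop (𝓝 ((π/2)⁻¹)) := hWlim.inv₀ hpi
  have h3 := (h1.const_mul (128/3 : ℝ)).mul h2
  have hval : (128/3 : ℝ) * 5 * (π/2)⁻¹ = 1280 / (3 * π) := by
    field_simp
    ring
  rw [hval] at h3
  refine h3.congr fun n => ?_
  have hW : 0 < W n := W_pos n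
  have hn : ((n:ℝ) + 1) ≠ 0 := by positivity
  simp only [Wf]
  field_simp

theorem Mseries_deriv_value :
    HasSum (fun n : ℕ =>
      (n : ℝ) * (catalan n * catalan (n + 1) : ℝ) / 16 ^ (n - 1))
      (128 * (10 / (3 * π) - 1)) := by
  have hnn : ∀ i : ℕ, (0:ℝ) ≤ (i : ℝ) * (catalan i * catalan (i + 1) : ℝ) / 16 ^ (i - 1) := by
    intro i; positivity
  rw [hasSum_iff_tendsto_nat_of_nonneg hnn]
  have hsum : ∀ N : ℕ, (∑ i ∈ Finset.range N,
      (i : ℝ) * (catalan i * catalan (i + 1) : ℝ) / 16 ^ (i - 1)) = Wf N - Wf 0 := by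
    intro N
    calc (∑ i ∈ Finset.range N, (i : ℝ) * (catalan i * catalan (i + 1) : ℝ) / 16 ^ (i - 1))
        = ∑ i ∈ Finset.range N, (Wf (i + 1) - Wf i) :=
          Finset.sum_congr rfl fun i _ => Waux_tele i
      _ = Wf N - Wf 0 := Finset.sum_range_sub Wf N
  simp only [hsum]
  have hWf0 : Wf 0 = 128 := by
    simp [Wf, W]
  rw [hWf0]
  have := Wf_tendsto.sub (tendsto_const_nhds (x := (128:ℝ)))
  convert this using 2
  have hpi : (π : ℝ) ≠ 0 := pi_ne_zero
  field_simp
  ring
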